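/- Let G be a cycle graph with vertices alternately colored black and white, and suppose each vertex carries an input in {0,1,2} and a decision in {0,1}, where the inputs are determined by a walk through all 9 input edges (the subdivided input complex restricted to a cycle through the edges (W,0)-(B,1), (B,1)-(W,2), (W,2)-(B,2), (B,2)-(W,0) etc.). Then the equality negation condition (adjacent vertices decide equally iff their inputs differ) cannot hold on all edges of any subdivision of this cycle. -/

import Mathlib

/-- Inputs along the closed walk (W,0) → (B,1) → (W,2) → (B,2) → (W,0) through the
subdivided input graph, where each of the four input edges is subdivided into `m` edges
(`m` odd), vertices alternate colors (position `t` has color W if `t` is even, B if odd),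
and each subdivision vertex inherits the input of the original endpoint of its color.
Positions `2m ≤ t ≤ 3m` form the equal-input segment (both inputs `2`). -/
def walkInput (m t : ℕ) : Fin 3 :=
  if t ≤ m then (if Even t then 0 else 1)
  else if t ≤ 2 * m then (if Even t then 2 else 1)
  else if t ≤ 3 * m then 2
  else if Even t then 0 else 2

/-- Adjacent inputs along the walk are equal exactly on the segment `2m ≤ t < 3m`. -/
lemma key (m t : ℕ) (hm : Odd m) (ht : t < 4 * m) :
    (walkInput m t = walkInput m (t + 1)) ↔ (2 * m ≤ t ∧ t < 3 * m) := by
  obtain ⟨k, hk⟩ := hm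
  rcases Nat.even_or_odd t with ⟨a, ha⟩ | ⟨a, ha⟩ <;> subst ha <;> subst hk <;>
    simp only [walkInput, Nat.even_add_one, even_two_mul, Even.add_self, not_true, not_not,
      not_false_iff, if_true, if_false] <;>
    split_ifs <;>
      first
      | (exfalso; omega)
      | (exact iff_of_true rfl (by omega))
      | (refine iff_of_false (by decide) (by omega))

lemma fin2_ne_iff : ∀ a b : Fin 2, a ≠ b ↔ b = a + 1 := by decide

open Fin.NatCast

lemma odd_cast_fin2 {m : ℕ} (hm : Odd m) : (m : Fin 2) = 1 := by
  obtain ⟨k, rfl⟩ := hm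
  push_cast
  simp

/-- on the closed walk (W,0) → (B,1) → (W,2) → (B,2) → (W,0), suitably
subdivided (each segment into an odd number `m` of edges, so colors alternate), the
equality negation constraint — adjacent vertices decide equally iff their inputs differ —
cannot hold on all edges: no decision assignment `d` is consistent around the cycle. -/
theorem eqneg_cycle_inconsistent (m : ℕ) (hm : Odd m) :
    ¬ ∃ d : ℕ → Fin 2,
      d (4 * m) = d 0 ∧
      ∀ t < 4 * m, (walkInput m t = walkInput m (t + 1) ↔ d t ≠ d (t + 1)) := by
  rintro ⟨d, hcyc, hcons⟩
  have main : ∀ t, t ≤ 4 * m → d t = d 0 + ((min (t - 2 * m) m : ℕ) : Fin 2) := by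
    intro t
    induction t with
    | zero => intro _; simp
    | succ t ih =>
      intro ht
      have ht' : t < 4 * m := by omega
      have ihd := ih (by omega)
      have hc := hcons t ht'
      rw [key m t hm ht'] at hc
      by_cases hseg : 2 * m ≤ t ∧ t < 3 * m
      · have hne : d t ≠ d (t + 1) := hc.mp hseg
        rw [fin2_ne_iff _ _] at hne
        rw [hne, ihd]
        have h1 : min (t + 1 - 2 * m) m = min (t - 2 * m) m + 1 := by omega
        rw [h1]
        push_cast
        exact add_assoc _ _ _
      · have heq : d (t + 1) = d t := by
          by_contra h
          exact hseg (hc.mpr (fun h' => h h'.symm))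
        rw [heq, ihd]
        have h1 : min (t + 1 - 2 * m) m = min (t - 2 * m) m := by omega
        rw [h1]
  have h4 := main (4 * m) le_rfl
  rw [hcyc] at h4
  have hmin : min (4 * m - 2 * m) m = m := by omega
  rw [hmin, odd_cast_fin2 hm] at h4
  simp [left_eq_add] at h4
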